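/- Let B be a family of blocks in a monoid M with parameter type Θ and let n ≥ 1. For every parameter assignment θ for the triangle T_n and every parameter assignment φ for the cascade C_{1,n}, there exists a parameter assignment ψ such that T_n(θ) * C_{1,n}(φ) = T_n(ψ); that is, a triangle of height n and a cascade of height n can be merged into a triangle of height n. -/
import Mathlib

/-- The cascade `C_{i,j}(θ) = B i (θ i) * B (i+1) (θ (i+1)) * ⋯ * B j (θ j)`. -/
def cascade {M Θ : Type*} [Monoid M] (B : ℕ → Θ → M) (i j : ℕ) (θ : ℕ → Θ) : M :=
  ((List.range (j + 1 - i)).map (fun k => B (i + k) (θ (i + k)))).prod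

/-- The triangle `T_n(θ) = C_{n,n} * C_{n-1,n} * ⋯ * C_{1,n}`, where the `k`-th cascade
`C_{n-k,n}` carries its own parameters `θ k`. -/
def triangle {M Θ : Type*} [Monoid M] (B : ℕ → Θ → M) (n : ℕ) (θ : ℕ → ℕ → Θ) : M :=
  ((List.range n).map (fun k => cascade B (n - k) n (θ k))).prod

section Aux

variable {M Θ : Type*} [Monoid M] (B : ℕ → Θ → M)

lemma cascade_empty {i j : ℕ} (h : j < i) (θ : ℕ → Θ) : cascade B i j θ = 1 := by
  unfold cascade
  have : j + 1 - i = 0 := by omega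
  simp [this]

lemma cascade_single (i : ℕ) (θ : ℕ → Θ) : cascade B i i θ = B i (θ i) := by
  unfold cascade
  have : i + 1 - i = 1 := by omega
  rw [this]
  simp [List.range_succ]

lemma cascade_cons {i j : ℕ} (h : i ≤ j) (θ : ℕ → Θ) :
    cascade B i j θ = B i (θ i) * cascade B (i + 1) j θ := by
  unfold cascade
  have h1 : j + 1 - i = (j + 1 - (i + 1)) + 1 := by omega
  rw [h1, List.range_succ_eq_map]
  simp only [List.map_cons, List.map_map, List.prod_cons, add_zero]
  congr 1
  apply congrArg List.prod
  apply List.map_congr_left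
  intro k _
  simp only [Function.comp_apply, Nat.succ_eq_add_one]
  have : i + (k + 1) = i + 1 + k := by omega
  rw [this]

lemma cascade_congr {i j : ℕ} (θ θ' : ℕ → Θ) (h : ∀ k, i ≤ k → θ k = θ' k) :
    cascade B i j θ = cascade B i j θ' := by
  unfold cascade
  congr 1
  apply List.map_congr_left
  intro k _
  rw [h (i + k) (Nat.le_add_right _ _)]

lemma commute_cascade
    (hcomm : ∀ (i j : ℕ), 1 < Nat.dist i j → ∀ (α β : Θ),
      B i α * B j β = B j β * B i α)
    {k i j : ℕ} (h : k + 1 < i) (γ : Θ) (θ : ℕ → Θ) :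
    Commute (B k γ) (cascade B i j θ) := by
  unfold cascade
  apply Commute.list_prod_right
  intro x hx
  simp only [List.mem_map, List.mem_range] at hx
  obtain ⟨t, _, rfl⟩ := hx
  exact hcomm k (i + t) (by simp [Nat.dist]; omega) γ (θ (i + t))

/-- Pure monoid associativity juggling. -/
lemma elem_calc {x1 x2 X y1 Y u v w G A' B' : M}
    (h1 : X * y1 = y1 * X)
    (h2 : x1 * x2 * y1 = u * v * w)
    (h3 : w * X = G)
    (h4 : G * Y = A' * B')
    (h5 : v * A' = A' * v) :
    x1 * (x2 * X) * (y1 * Y) = (u * A') * (v * B') := by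
  calc x1 * (x2 * X) * (y1 * Y) = x1 * (x2 * (X * (y1 * Y))) := by
        simp [mul_assoc]
    _ = x1 * (x2 * (y1 * (X * Y))) := by
        rw [← mul_assoc X y1, h1, mul_assoc y1 X]
    _ = (x1 * x2 * y1) * (X * Y) := by simp [mul_assoc]
    _ = (u * v * w) * (X * Y) := by rw [h2]
    _ = u * (v * (w * (X * Y))) := by simp [mul_assoc]
    _ = u * (v * (G * Y)) := by rw [← mul_assoc w X Y, h3]
    _ = u * (v * (A' * B')) := by rw [h4]
    _ = u * (A' * (v * B')) := by rw [← mul_assoc v A', h5, mul_assoc]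
    _ = (u * A') * (v * B') := by simp [mul_assoc]

/-- Key lemma: two cascades `C_{i,j}` merge into `C_{i+1,j} * C_{i,j}`. -/
lemma cascade_absorb
    (hfusion : ∀ (i : ℕ) (α β : Θ), ∃ a : Θ, B i α * B i β = B i a)
    (hcomm : ∀ (i j : ℕ), 1 < Nat.dist i j → ∀ (α β : Θ),
      B i α * B j β = B j β * B i α)
    (hturnover : ∀ (i : ℕ) (α β γ : Θ), ∃ a b c : Θ,
      B i α * B (i + 1) β * B i γ = B (i + 1) a * B i b * B (i + 1) c) :
    ∀ (d i j : ℕ), i ≤ j → j - i = d → ∀ α β : ℕ → Θ, ∃ a b : ℕ → Θ,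
      cascade B i j α * cascade B i j β = cascade B (i + 1) j a * cascade B i j b := by
  intro d
  induction d with
  | zero =>
    intro i j hij hd α β
    have hji : j = i := by omega
    subst hji
    obtain ⟨c, hc⟩ := hfusion j (α j) (β j)
    refine ⟨α, fun _ => c, ?_⟩
    rw [cascade_single, cascade_single, cascade_empty B (by omega), cascade_single, hc, one_mul]
  | succ d ih =>
    intro i j hij hd α β
    have hij' : i < j := by omega
    obtain ⟨a, b, c, htov⟩ := hturnover i (α i) (α (i + 1)) (β i)
    obtain ⟨a', b', habsorb⟩ := ih (i + 1) j (by omega) (by omega)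
      (Function.update α (i + 1) c) β
    have e1 : cascade B i j α
        = B i (α i) * (B (i + 1) (α (i + 1)) * cascade B (i + 2) j α) := by
      rw [cascade_cons B (le_of_lt hij'), cascade_cons B (by omega : i + 1 ≤ j)]
    have e2 : cascade B i j β = B i (β i) * cascade B (i + 1) j β :=
      cascade_cons B (le_of_lt hij') β
    have eγ : cascade B (i + 1) j (Function.update α (i + 1) c)
        = B (i + 1) c * cascade B (i + 2) j α := by
      rw [cascade_cons B (by omega : i + 1 ≤ j)]
      congr 1
      · rw [Function.update_self]
      · exact cascade_congr B _ _ (fun k hk => Function.update_of_ne (by omega) _ _)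
    have eA : cascade B (i + 1) j (Function.update a' (i + 1) a)
        = B (i + 1) a * cascade B (i + 2) j a' := by
      rw [cascade_cons B (by omega : i + 1 ≤ j)]
      congr 1
      · rw [Function.update_self]
      · exact cascade_congr B _ _ (fun k hk => Function.update_of_ne (by omega) _ _)
    have eB : cascade B i j (Function.update b' i b)
        = B i b * cascade B (i + 1) j b' := by
      rw [cascade_cons B (le_of_lt hij')]
      congr 1
      · rw [Function.update_self]
      · exact cascade_congr B _ _ (fun k hk => Function.update_of_ne (by omega) _ _)
    refine ⟨Function.update a' (i + 1) a, Function.update b' i b, ?_⟩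
    rw [e1, e2, eA, eB]
    exact elem_calc
      ((commute_cascade B hcomm (by omega) (β i) α).symm.eq)
      htov eγ.symm habsorb
      ((commute_cascade B hcomm (by omega) b a').eq)

/-- Partial triangle: product of the first `m` cascades of `T_n`. -/
def ptri (n m : ℕ) (θ : ℕ → ℕ → Θ) : M :=
  ((List.range m).map (fun k => cascade B (n - k) n (θ k))).prod

lemma ptri_succ (n m : ℕ) (θ : ℕ → ℕ → Θ) :
    ptri B n (m + 1) θ = ptri B n m θ * cascade B (n - m) n (θ m) := by
  unfold ptri
  rw [List.range_succ]
  simp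

lemma ptri_congr (n m : ℕ) (θ θ' : ℕ → ℕ → Θ) (h : ∀ k < m, θ k = θ' k) :
    ptri B n m θ = ptri B n m θ' := by
  unfold ptri
  congr 1
  apply List.map_congr_left
  intro k hk
  rw [h k (List.mem_range.mp hk)]

lemma ptri_absorb
    (hfusion : ∀ (i : ℕ) (α β : Θ), ∃ a : Θ, B i α * B i β = B i a)
    (hcomm : ∀ (i j : ℕ), 1 < Nat.dist i j → ∀ (α β : Θ),
      B i α * B j β = B j β * B i α)
    (hturnover : ∀ (i : ℕ) (α β γ : Θ), ∃ a b c : Θ,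
      B i α * B (i + 1) β * B i γ = B (i + 1) a * B i b * B (i + 1) c)
    (n : ℕ) :
    ∀ m, m ≤ n → ∀ (θ : ℕ → ℕ → Θ) (φ : ℕ → Θ), ∃ ψ : ℕ → ℕ → Θ,
      ptri B n m θ * cascade B (n + 1 - m) n φ = ptri B n m ψ := by
  intro m
  induction m with
  | zero =>
    intro _ θ φ
    exact ⟨θ, by simp [ptri, cascade_empty B (by omega : n < n + 1)]⟩
  | succ m ih =>
    intro hm θ φ
    obtain ⟨a, b, hab⟩ := cascade_absorb B hfusion hcomm hturnover
      (n - (n - m)) (n - m) n (by omega) rfl (θ m) φ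
    have h1 : n + 1 - (m + 1) = n - m := by omega
    have h2 : n - m + 1 = n + 1 - m := by omega
    rw [h2] at hab
    obtain ⟨ψ', hψ'⟩ := ih (by omega) θ a
    refine ⟨Function.update ψ' m b, ?_⟩
    rw [ptri_succ, ptri_succ, h1, mul_assoc, hab, ← mul_assoc, hψ',
      ptri_congr B n m (Function.update ψ' m b) ψ'
        (fun k hk => Function.update_of_ne (by omega) _ _),
      Function.update_self]

end Aux

/-- **Corollary (triangle absorbs cascade).**  Let `B` be a family of blocks in a monoid `M`
(satisfying fusion, commutation and turnover) and `n ≥ 1`.  A triangle of height `n` and a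
cascade `C_{1,n}` can be merged into a triangle of height `n`. -/
theorem triangle_absorbs_cascade {M Θ : Type*} [Monoid M] (B : ℕ → Θ → M)
    (hfusion : ∀ (i : ℕ) (α β : Θ), ∃ a : Θ, B i α * B i β = B i a)
    (hcomm : ∀ (i j : ℕ), 1 < Nat.dist i j → ∀ (α β : Θ),
      B i α * B j β = B j β * B i α)
    (hturnover : ∀ (i : ℕ) (α β γ : Θ), ∃ a b c : Θ,
      B i α * B (i + 1) β * B i γ = B (i + 1) a * B i b * B (i + 1) c)
    (n : ℕ) (hn : 1 ≤ n) :
    ∀ (θ : ℕ → ℕ → Θ) (φ : ℕ → Θ), ∃ ψ : ℕ → ℕ → Θ,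
      triangle B n θ * cascade B 1 n φ = triangle B n ψ := by
  intro θ φ
  obtain ⟨ψ, hψ⟩ := ptri_absorb B hfusion hcomm hturnover n n le_rfl θ φ
  have h1 : n + 1 - n = 1 := by omega
  rw [h1] at hψ
  exact ⟨ψ, hψ⟩
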